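/- Let {θ_t}_{t=1,2,…} be a sequence of CP parameters such that f(θ_t) → inf_θ f(θ) as t → ∞. If the infimum inf_θ f(θ) is not attained by any θ, then the magnitude diverges: M(θ_t) → ∞ as t → ∞. -/

import Mathlib

open scoped BigOperators
open Filter Matrix

noncomputable section

/-- The coefficient tensor `∑_{r<R} β_{1,r} ∘ ⋯ ∘ β_{D,r}` built from a CP parameter. -/
def cpDecomp {D : ℕ} {p : Fin D → ℕ} (R : ℕ) (β : Fin R → ∀ d : Fin D, Fin (p d) → ℝ) :
    (∀ d : Fin D, Fin (p d)) → ℝ :=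
  fun i => ∑ r : Fin R, ∏ d : Fin D, β r d (i d)

/-- CP rank of an order-`D` tensor. -/
def cpRank {D : ℕ} {p : Fin D → ℕ} (A : (∀ d : Fin D, Fin (p d)) → ℝ) : ℕ :=
  sInf {R : ℕ | ∃ β : Fin R → ∀ d : Fin D, Fin (p d) → ℝ, A = cpDecomp R β}

/-- Frobenius norm of a tensor. -/
def frob {D : ℕ} {p : Fin D → ℕ} (A : (∀ d : Fin D, Fin (p d)) → ℝ) : ℝ :=
  Real.sqrt (∑ i, (A i) ^ 2)

/-- The squared loss `f(θ) = ∑ᵢ (yᵢ − ⟨∑ᵣ β_{1,r}∘⋯∘β_{D,r}, Xᵢ⟩)²` of a CP parameter. -/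
def floss {D n : ℕ} {p : Fin D → ℕ} (R : ℕ) (y : Fin n → ℝ)
    (X : Fin n → (∀ d : Fin D, Fin (p d)) → ℝ)
    (θ : Fin R → ∀ d : Fin D, Fin (p d) → ℝ) : ℝ :=
  ∑ i, (y i - ∑ j, cpDecomp R θ j * X i j) ^ 2

/-- The magnitude `M(θ) = ∑ᵣ ∏_d ‖β_{d,r}‖` of a CP parameter. -/
def mag {D R : ℕ} {p : Fin D → ℕ} (θ : Fin R → ∀ d : Fin D, Fin (p d) → ℝ) : ℝ :=
  ∑ r : Fin R, ∏ d : Fin D, Real.sqrt (∑ l, θ r d l ^ 2)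

namespace Stmt4Aux

variable {D n R : ℕ} {p : Fin D → ℕ}

/-- Euclidean norm of the `(r,d)` component. -/
def vnorm (v : Fin R → ∀ d : Fin D, Fin (p d) → ℝ) (r : Fin R) (d : Fin D) : ℝ :=
  Real.sqrt (∑ l, v r d l ^ 2)

def pr (v : Fin R → ∀ d : Fin D, Fin (p d) → ℝ) (r : Fin R) : ℝ :=
  ∏ d, vnorm v r d

open scoped Classical in
/-- Normalized CP parameter: each component rescaled to have norm `(pr v r)^(1/D)`. -/
def nrmz (v : Fin R → ∀ d : Fin D, Fin (p d) → ℝ) :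
    Fin R → ∀ d : Fin D, Fin (p d) → ℝ :=
  fun r d l =>
    if ∀ d', vnorm v r d' ≠ 0 then v r d l * (pr v r ^ (1 / (D : ℝ)) / vnorm v r d) else 0

lemma vnorm_nonneg (v : Fin R → ∀ d : Fin D, Fin (p d) → ℝ) (r : Fin R) (d : Fin D) :
    0 ≤ vnorm v r d := Real.sqrt_nonneg _

lemma pr_nonneg (v : Fin R → ∀ d : Fin D, Fin (p d) → ℝ) (r : Fin R) : 0 ≤ pr v r :=
  Finset.prod_nonneg fun d _ => vnorm_nonneg v r d

lemma pr_le_mag (v : Fin R → ∀ d : Fin D, Fin (p d) → ℝ) (r : Fin R) : pr v r ≤ mag v := by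
  unfold mag
  exact Finset.single_le_sum (f := fun r => ∏ d, Real.sqrt (∑ l, v r d l ^ 2))
    (fun r _ => Finset.prod_nonneg fun d _ => Real.sqrt_nonneg _) (Finset.mem_univ r)

lemma comp_eq_zero {v : Fin R → ∀ d : Fin D, Fin (p d) → ℝ} {r : Fin R} {d : Fin D}
    (h : vnorm v r d = 0) (l : Fin (p d)) : v r d l = 0 := by
  unfold vnorm at h
  have hsum : (∑ l, v r d l ^ 2) = 0 := by
    have h0 : (0:ℝ) ≤ ∑ l, v r d l ^ 2 := Finset.sum_nonneg fun l _ => sq_nonneg _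
    nlinarith [Real.sq_sqrt h0, h]
  have := (Finset.sum_eq_zero_iff_of_nonneg (fun l _ => sq_nonneg (v r d l))).mp hsum
    l (Finset.mem_univ l)
  exact pow_eq_zero_iff (two_ne_zero) |>.mp this

lemma cpDecomp_nrmz (v : Fin R → ∀ d : Fin D, Fin (p d) → ℝ) :
    cpDecomp R (nrmz v) = cpDecomp R v := by
  classical
  funext i
  unfold cpDecomp
  refine Finset.sum_congr rfl fun r _ => ?_
  by_cases h : ∀ d', vnorm v r d' ≠ 0
  · simp only [nrmz, if_pos h]
    rcases Nat.eq_zero_or_pos D with hD | hD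
    · subst hD; simp
    have hvpos : ∀ d, 0 < vnorm v r d := fun d =>
      lt_of_le_of_ne (vnorm_nonneg v r d) (Ne.symm (h d))
    have hP : 0 < pr v r := Finset.prod_pos fun d _ => hvpos d
    rw [Finset.prod_mul_distrib, Finset.prod_div_distrib, Finset.prod_const]
    have hcard : (Finset.univ : Finset (Fin D)).card = D := by simp
    rw [hcard]
    have hpow : (pr v r ^ (1 / (D : ℝ))) ^ D = pr v r := by
      rw [← Real.rpow_natCast (pr v r ^ (1 / (D : ℝ))) D, ← Real.rpow_mul hP.le]
      have : 1 / (D : ℝ) * D = 1 := by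
        field_simp
      rw [this, Real.rpow_one]
    rw [hpow]
    have hprP : (∏ d, vnorm v r d) = pr v r := rfl
    rw [hprP, div_self hP.ne', mul_one]
  · push_neg at h
    obtain ⟨d₀, hd₀⟩ := h
    have h1 : ∏ d, nrmz v r d (i d) = 0 := by
      refine Finset.prod_eq_zero (Finset.mem_univ d₀) ?_
      simp only [nrmz]
      rw [if_neg]
      push_neg
      exact ⟨d₀, hd₀⟩
    have h2 : ∏ d, v r d (i d) = 0 :=
      Finset.prod_eq_zero (Finset.mem_univ d₀) (comp_eq_zero hd₀ (i d₀))
    rw [h1, h2]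

lemma floss_nrmz (y : Fin n → ℝ) (X : Fin n → (∀ d : Fin D, Fin (p d)) → ℝ)
    (v : Fin R → ∀ d : Fin D, Fin (p d) → ℝ) :
    floss R y X (nrmz v) = floss R y X v := by
  unfold floss
  rw [cpDecomp_nrmz]

lemma nrmz_entry_bound {v : Fin R → ∀ d : Fin D, Fin (p d) → ℝ} {C : ℝ}
    (hC : mag v ≤ C) (r : Fin R) (d : Fin D) (l : Fin (p d)) :
    |nrmz v r d l| ≤ max C 1 := by
  classical
  simp only [nrmz]
  by_cases h : ∀ d', vnorm v r d' ≠ 0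
  · rw [if_pos h]
    have hvpos : 0 < vnorm v r d :=
      lt_of_le_of_ne (vnorm_nonneg v r d) (Ne.symm (h d))
    have hP0 : 0 ≤ pr v r := pr_nonneg v r
    have he0 : (0:ℝ) ≤ 1 / (D : ℝ) := one_div_nonneg.mpr (Nat.cast_nonneg D)
    have hs0 : 0 ≤ pr v r ^ (1 / (D : ℝ)) / vnorm v r d :=
      div_nonneg (Real.rpow_nonneg hP0 _) hvpos.le
    rw [abs_mul, abs_of_nonneg hs0]
    have habs : |v r d l| ≤ vnorm v r d := by
      rw [← Real.sqrt_sq_eq_abs]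
      exact Real.sqrt_le_sqrt (Finset.single_le_sum
        (fun l' _ => sq_nonneg (v r d l')) (Finset.mem_univ l))
    calc |v r d l| * (pr v r ^ (1 / (D : ℝ)) / vnorm v r d)
        ≤ vnorm v r d * (pr v r ^ (1 / (D : ℝ)) / vnorm v r d) :=
          mul_le_mul_of_nonneg_right habs hs0
      _ = pr v r ^ (1 / (D : ℝ)) := by field_simp
      _ ≤ (max C 1) ^ (1 / (D : ℝ)) := by
          apply Real.rpow_le_rpow hP0 _ he0
          exact le_trans (le_trans (pr_le_mag v r) hC) (le_max_left C 1)
      _ ≤ max C 1 := by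
          nth_rewrite 2 [← Real.rpow_one (max C 1)]
          apply Real.rpow_le_rpow_of_exponent_le (le_max_right C 1)
          rcases Nat.eq_zero_or_pos D with hD | hD
          · subst hD; norm_num
          · rw [div_le_one (by exact_mod_cast hD)]
            exact_mod_cast hD
  · rw [if_neg h]
    simp only [abs_zero]
    exact le_trans zero_le_one (le_max_right C 1)

lemma continuous_floss (y : Fin n → ℝ) (X : Fin n → (∀ d : Fin D, Fin (p d)) → ℝ) :
    Continuous (floss (D := D) (p := p) R y X) := by
  unfold floss cpDecomp
  apply continuous_finset_sum
  intro i _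
  apply Continuous.pow
  apply Continuous.sub continuous_const
  apply continuous_finset_sum
  intro j _
  apply Continuous.mul _ continuous_const
  apply continuous_finset_sum
  intro r _
  apply continuous_finset_prod
  intro d _
  exact (continuous_apply (j d)).comp ((continuous_apply d).comp (continuous_apply r))

end Stmt4Aux

/-- if `f(θ_t) → inf_θ f(θ)` and the infimum of `f` is not attained by any
CP parameter `θ`, then the magnitude diverges: `M(θ_t) → ∞`. -/
theorem stmt4 {D n R : ℕ} {p : Fin D → ℕ} (hR : 1 ≤ R)
    (y : Fin n → ℝ) (X : Fin n → (∀ d : Fin D, Fin (p d)) → ℝ)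
    (θ : ℕ → Fin R → ∀ d : Fin D, Fin (p d) → ℝ)
    (hconv : Tendsto (fun t => floss R y X (θ t)) atTop
      (nhds (⨅ θ' : Fin R → ∀ d : Fin D, Fin (p d) → ℝ, floss R y X θ')))
    (hnotattained : ¬ ∃ θ' : Fin R → ∀ d : Fin D, Fin (p d) → ℝ,
      floss R y X θ' = ⨅ θ'' : Fin R → ∀ d : Fin D, Fin (p d) → ℝ, floss R y X θ'') :
    Tendsto (fun t => mag (θ t)) atTop atTop := by
  classical
  by_contra hdiv
  rw [tendsto_atTop] at hdiv
  push_neg at hdiv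
  obtain ⟨C, hC⟩ := hdiv
  have hC' : ∃ᶠ t in atTop, mag (θ t) < C := hC
  obtain ⟨φ, hφ, hφC⟩ := Filter.extraction_of_frequently_atTop hC'
  set B := max C 1 with hB
  have hB0 : 0 < B := lt_of_lt_of_le one_pos (le_max_right C 1)
  set u : ℕ → Fin R → ∀ d : Fin D, Fin (p d) → ℝ :=
    fun k => Stmt4Aux.nrmz (θ (φ k)) with hu
  have hmem : ∀ k, u k ∈ Metric.closedBall (0 : Fin R → ∀ d : Fin D, Fin (p d) → ℝ) B := by
    intro k
    rw [Metric.mem_closedBall, dist_zero_right]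
    rw [pi_norm_le_iff_of_nonneg hB0.le]
    intro r
    rw [pi_norm_le_iff_of_nonneg hB0.le]
    intro d
    rw [pi_norm_le_iff_of_nonneg hB0.le]
    intro l
    rw [Real.norm_eq_abs]
    exact Stmt4Aux.nrmz_entry_bound (le_of_lt (hφC k)) r d l
  obtain ⟨x, _, ψ, hψ, hlim⟩ :=
    (isCompact_closedBall (0 : Fin R → ∀ d : Fin D, Fin (p d) → ℝ) B).tendsto_subseq hmem
  have hfl1 : Tendsto (fun k => floss R y X (u (ψ k))) atTop
      (nhds (⨅ θ'' : Fin R → ∀ d : Fin D, Fin (p d) → ℝ, floss R y X θ'')) := by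
    have heq : (fun k => floss R y X (u (ψ k))) =
        (fun t => floss R y X (θ t)) ∘ (φ ∘ ψ) := by
      funext k
      simp only [Function.comp_apply, hu]
      exact Stmt4Aux.floss_nrmz y X (θ (φ (ψ k)))
    rw [heq]
    exact hconv.comp ((hφ.comp hψ).tendsto_atTop)
  have hfl2 : Tendsto (fun k => floss R y X (u (ψ k))) atTop
      (nhds (floss R y X x)) :=
    ((Stmt4Aux.continuous_floss y X).tendsto x).comp hlim
  exact hnotattained ⟨x, tendsto_nhds_unique hfl2 hfl1⟩
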